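/- Under the distributionally robust soft policy improvement update π_{k+1} = argmin_{π'} D_KL( π'(·|s) ‖ exp(Q^{π_k}(s,·)/α)/Z(s) ), the robust soft Q-function is monotonically improved: Q^{π_{k+1}}_{M_δ}(s,a) ≥ Q^{π_k}_{M_δ}(s,a) for all (s,a), where Q^π_{M_δ} is the fixed point of the distributionally robust soft Bellman operator T_δ^π. -/
import Mathlib

open Real

private noncomputable def gfun {S A : Type*} [Fintype A] (α : ℝ) (pol : S → A → ℝ)
    (Q : S × A → ℝ) (s' : S) : ℝ :=
  ∑ a', pol s' a' * (Q (s', a') - α * Real.log (pol s' a'))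

private lemma aux_sInf_le {S : Type*} [Fintype S] [Nonempty S]
    (D : Set (S → ℝ)) (hDne : D.Nonempty)
    (hD : ∀ p ∈ D, (∀ s', 0 ≤ p s') ∧ (∑ s', p s' = 1))
    (g1 g2 : S → ℝ) (c : ℝ) (hg : ∀ s', g1 s' ≤ g2 s' + c) :
    sInf ((fun p => ∑ s', p s' * g1 s') '' D) ≤
      sInf ((fun p => ∑ s', p s' * g2 s') '' D) + c := by
  set m : ℝ := Finset.univ.inf' Finset.univ_nonempty g1 with hm
  have hlow : ∀ p ∈ D, m ≤ ∑ s', p s' * g1 s' := by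
    intro p hp
    calc m = (∑ s', p s') * m := by rw [(hD p hp).2, one_mul]
      _ = ∑ s', p s' * m := by rw [Finset.sum_mul]
      _ ≤ ∑ s', p s' * g1 s' := Finset.sum_le_sum fun s' _ =>
          mul_le_mul_of_nonneg_left (Finset.inf'_le _ (Finset.mem_univ s')) ((hD p hp).1 s')
  have hbdd : BddBelow ((fun p => ∑ s', p s' * g1 s') '' D) := by
    refine ⟨m, ?_⟩
    rintro x ⟨p, hp, rfl⟩
    exact hlow p hp
  have hne : ((fun p => ∑ s', p s' * g2 s') '' D).Nonempty := hDne.image _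
  have key : sInf ((fun p => ∑ s', p s' * g1 s') '' D) - c ≤
      sInf ((fun p => ∑ s', p s' * g2 s') '' D) := by
    refine le_csInf hne ?_
    rintro b ⟨p, hp, rfl⟩
    have h1 : (∑ s', p s' * g1 s') ≤ (∑ s', p s' * g2 s') + c := by
      calc ∑ s', p s' * g1 s' ≤ ∑ s', p s' * (g2 s' + c) :=
            Finset.sum_le_sum fun s' _ =>
              mul_le_mul_of_nonneg_left (hg s') ((hD p hp).1 s')
        _ = (∑ s', p s' * g2 s') + (∑ s', p s') * c := by
            rw [Finset.sum_mul, ← Finset.sum_add_distrib]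
            exact Finset.sum_congr rfl fun s' _ => by ring
        _ = (∑ s', p s' * g2 s') + c := by rw [(hD p hp).2, one_mul]
    have h2 : sInf ((fun p => ∑ s', p s' * g1 s') '' D) ≤ ∑ s', p s' * g1 s' :=
      csInf_le hbdd ⟨p, hp, rfl⟩
    linarith
  linarith

/-- Distributionally robust soft policy improvement. If `π_{k+1}`
(weakly) improves on `π_k` in the KL-projection objective built from the robust
soft Q-function `Q^{π_k}`, then `Q^{π_{k+1}} ≥ Q^{π_k}` pointwise, where `Q^π`
denotes the fixed point of the distributionally robust soft Bellman operator. -/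
theorem stmt5 {S A : Type*} [Fintype S] [Fintype A] [Nonempty S] [Nonempty A]
    (p0 : S → A → S → ℝ) (hp0 : ∀ s a s', 0 ≤ p0 s a s')
    (hp01 : ∀ s a, ∑ s', p0 s a s' = 1)
    (r : S → A → ℝ) (δ α γ : ℝ) (hδ : 0 < δ) (hα : 0 < α)
    (hγ0 : 0 ≤ γ) (hγ1 : γ < 1)
    -- the primal distributionally robust soft Bellman operator, for each policy
    (T : (S → A → ℝ) → (S × A → ℝ) → S × A → ℝ)
    (hT : ∀ (pol : S → A → ℝ) (Q : S × A → ℝ) (s : S) (a : A),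
      T pol Q (s, a) = r s a + γ *
        sInf {x | ∃ p : S → ℝ, (∀ s', 0 ≤ p s') ∧ (∑ s', p s' = 1) ∧
          (∀ s', p0 s a s' = 0 → p s' = 0) ∧
          (∑ s', p s' * Real.log (p s' / p0 s a s')) ≤ δ ∧
          x = ∑ s', p s' * ∑ a', pol s' a' *
            (Q (s', a') - α * Real.log (pol s' a'))})
    -- the two policies, fully supported
    (polk polk1 : S → A → ℝ)
    (hk : ∀ s a, 0 < polk s a) (hk1sum : ∀ s, ∑ a, polk s a = 1)
    (hk1 : ∀ s a, 0 < polk1 s a) (hk1sum' : ∀ s, ∑ a, polk1 s a = 1)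
    -- robust soft Q-functions: fixed points of the respective operators
    (Qk Qk1 : S × A → ℝ)
    (hQk : T polk Qk = Qk) (hQk1 : T polk1 Qk1 = Qk1)
    -- normalizing constant
    (Z : S → ℝ) (hZ : ∀ s, Z s = ∑ a, Real.exp (Qk (s, a) / α))
    -- the KL-projection improvement condition
    (himp : ∀ s,
      (∑ a, polk1 s a * Real.log (polk1 s a / (Real.exp (Qk (s, a) / α) / Z s)))
        ≤ ∑ a, polk s a * Real.log (polk s a / (Real.exp (Qk (s, a) / α) / Z s))) :
    ∀ s a, Qk (s, a) ≤ Qk1 (s, a) := by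
  classical
  have hZpos : ∀ s, 0 < Z s := fun s => by
    rw [hZ]
    exact Finset.sum_pos (fun a _ => Real.exp_pos _) Finset.univ_nonempty
  -- the ambiguity set
  set D : S → A → Set (S → ℝ) := fun s a =>
    {p | (∀ s', 0 ≤ p s') ∧ (∑ s', p s' = 1) ∧ (∀ s', p0 s a s' = 0 → p s' = 0) ∧
      (∑ s', p s' * Real.log (p s' / p0 s a s')) ≤ δ} with hDdef
  have hD0 : ∀ s a, p0 s a ∈ D s a := by
    intro s a
    refine ⟨hp0 s a, hp01 s a, fun s' h => h, ?_⟩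
    have hz : ∀ s' ∈ Finset.univ, p0 s a s' * Real.log (p0 s a s' / p0 s a s') = 0 := by
      intro s' _
      rcases eq_or_lt_of_le (hp0 s a s') with h | h
      · rw [← h]; ring
      · rw [div_self (ne_of_gt h), Real.log_one, mul_zero]
    rw [Finset.sum_congr rfl hz]
    simpa using hδ.le
  have hDprop : ∀ s a, ∀ p ∈ D s a, (∀ s', 0 ≤ p s') ∧ (∑ s', p s' = 1) :=
    fun s a p hp => ⟨hp.1, hp.2.1⟩
  -- key one-step comparison for T
  have hTle : ∀ (pol1 pol2 : S → A → ℝ) (Q1 Q2 : S × A → ℝ) (c : ℝ),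
      (∀ s', gfun α pol1 Q1 s' ≤ gfun α pol2 Q2 s' + c) → ∀ s a,
      T pol1 Q1 (s, a) ≤ T pol2 Q2 (s, a) + γ * c := by
    intro pol1 pol2 Q1 Q2 c hgle s a
    rw [hT, hT]
    have hset : ∀ (pol : S → A → ℝ) (Q : S × A → ℝ),
        {x | ∃ p : S → ℝ, (∀ s', 0 ≤ p s') ∧ (∑ s', p s' = 1) ∧
          (∀ s', p0 s a s' = 0 → p s' = 0) ∧
          (∑ s', p s' * Real.log (p s' / p0 s a s')) ≤ δ ∧
          x = ∑ s', p s' * ∑ a', pol s' a' * (Q (s', a') - α * Real.log (pol s' a'))}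
        = (fun p => ∑ s', p s' * gfun α pol Q s') '' D s a := by
      intro pol Q
      ext x
      constructor
      · rintro ⟨p, h1, h2, h3, h4, h5⟩
        exact ⟨p, ⟨h1, h2, h3, h4⟩, h5.symm⟩
      · rintro ⟨p, ⟨h1, h2, h3, h4⟩, h5⟩
        exact ⟨p, h1, h2, h3, h4, h5.symm⟩
    rw [hset, hset]
    have hs := aux_sInf_le (D s a) ⟨p0 s a, hD0 s a⟩ (hDprop s a)
      (gfun α pol1 Q1) (gfun α pol2 Q2) c hgle
    have := mul_le_mul_of_nonneg_left hs hγ0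
    linarith
  -- g-monotonicity in Q for a fixed policy
  have hgQ : ∀ (pol : S → A → ℝ), (∀ s a, 0 ≤ pol s a) → (∀ s, ∑ a, pol s a = 1) →
      ∀ (Q1 Q2 : S × A → ℝ) (c : ℝ), (∀ sa, Q1 sa ≤ Q2 sa + c) →
      ∀ s', gfun α pol Q1 s' ≤ gfun α pol Q2 s' + c := by
    intro pol hpos hsum Q1 Q2 c hQle s'
    unfold gfun
    calc ∑ a', pol s' a' * (Q1 (s', a') - α * Real.log (pol s' a'))
        ≤ ∑ a', pol s' a' * ((Q2 (s', a') + c) - α * Real.log (pol s' a')) :=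
          Finset.sum_le_sum fun a' _ => mul_le_mul_of_nonneg_left
            (by linarith [hQle (s', a')]) (hpos s' a')
      _ = (∑ a', pol s' a' * (Q2 (s', a') - α * Real.log (pol s' a'))) +
            (∑ a', pol s' a') * c := by
          rw [Finset.sum_mul, ← Finset.sum_add_distrib]
          exact Finset.sum_congr rfl fun a' _ => by ring
      _ = _ + c := by rw [hsum s', one_mul]
  -- the policy improvement inequality at the g-level
  have hgimp : ∀ s', gfun α polk Qk s' ≤ gfun α polk1 Qk s' := by
    intro s'
    have hlog : ∀ (pol : S → A → ℝ), (∀ s a, 0 < pol s a) →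
        (∑ a, pol s' a * Real.log (pol s' a / (Real.exp (Qk (s', a) / α) / Z s')))
        = (∑ a, pol s' a * (Real.log (pol s' a) - Qk (s', a) / α)) +
          (∑ a, pol s' a) * Real.log (Z s') := by
      intro pol hpos
      rw [Finset.sum_mul, ← Finset.sum_add_distrib]
      refine Finset.sum_congr rfl fun a _ => ?_
      rw [Real.log_div (ne_of_gt (hpos s' a))
          (ne_of_gt (div_pos (Real.exp_pos _) (hZpos s'))),
        Real.log_div (Real.exp_ne_zero _) (ne_of_gt (hZpos s')), Real.log_exp]
      ring
    have h1 := himp s'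
    rw [hlog polk1 hk1, hlog polk hk, hk1sum s', hk1sum' s'] at h1
    -- h1 : ∑ polk1 * (log polk1 - Qk/α) + log Z ≤ ∑ polk * (log polk - Qk/α) + log Z
    have h2 : (∑ a, polk1 s' a * (Real.log (polk1 s' a) - Qk (s', a) / α))
        ≤ ∑ a, polk s' a * (Real.log (polk s' a) - Qk (s', a) / α) := by linarith
    have hrw : ∀ (pol : S → A → ℝ), gfun α pol Qk s'
        = -α * ∑ a, pol s' a * (Real.log (pol s' a) - Qk (s', a) / α) := by
      intro pol
      unfold gfun
      rw [Finset.mul_sum]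
      refine Finset.sum_congr rfl fun a _ => ?_
      field_simp
      ring
    rw [hrw polk, hrw polk1]
    nlinarith [h2, hα]
  -- step 1 : Qk ≤ T polk1 Qk
  have hstep : ∀ sa : S × A, Qk sa ≤ T polk1 Qk sa := by
    rintro ⟨s, a⟩
    have h := hTle polk polk1 Qk Qk 0 (fun s' => by simpa using hgimp s') s a
    calc Qk (s, a) = T polk Qk (s, a) := by rw [hQk]
      _ ≤ T polk1 Qk (s, a) + γ * 0 := h
      _ = T polk1 Qk (s, a) := by ring
  -- sup-norm bound
  obtain ⟨M, hM0, hMb⟩ : ∃ M : ℝ, 0 ≤ M ∧ ∀ sa : S × A, Qk sa ≤ Qk1 sa + M := by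
    refine ⟨Finset.univ.sup' Finset.univ_nonempty (fun sa : S × A => |Qk sa - Qk1 sa|),
      le_trans (abs_nonneg (Qk (Classical.arbitrary (S × A)) -
        Qk1 (Classical.arbitrary (S × A))))
        (Finset.le_sup' (fun sa : S × A => |Qk sa - Qk1 sa|)
          (Finset.mem_univ (Classical.arbitrary (S × A)))), ?_⟩
    intro sa
    have h := Finset.le_sup' (fun sa : S × A => |Qk sa - Qk1 sa|) (Finset.mem_univ sa)
    have h2 := abs_le.mp h
    linarith [h2.2]
  -- iterates
  have hiter : ∀ n : ℕ, (∀ sa : S × A, Qk sa ≤ (T polk1)^[n] Qk sa) ∧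
      (∀ sa : S × A, (T polk1)^[n] Qk sa ≤ Qk1 sa + γ ^ n * M) := by
    intro n
    induction n with
    | zero =>
      refine ⟨fun sa => le_refl _, fun sa => ?_⟩
      simpa using hMb sa
    | succ n ih =>
      obtain ⟨ih1, ih2⟩ := ih
      constructor
      · rintro ⟨s, a⟩
        rw [Function.iterate_succ_apply']
        have h := hTle polk1 polk1 Qk ((T polk1)^[n] Qk) 0
          (hgQ polk1 (fun s a => (hk1 s a).le) hk1sum' _ _ 0
            (fun sa => by simpa using ih1 sa)) s a
        calc Qk (s, a) ≤ T polk1 Qk (s, a) := hstep (s, a)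
          _ ≤ T polk1 ((T polk1)^[n] Qk) (s, a) + γ * 0 := h
          _ = T polk1 ((T polk1)^[n] Qk) (s, a) := by ring
      · rintro ⟨s, a⟩
        rw [Function.iterate_succ_apply']
        have h := hTle polk1 polk1 ((T polk1)^[n] Qk) Qk1 (γ ^ n * M)
          (hgQ polk1 (fun s a => (hk1 s a).le) hk1sum' _ _ _ ih2) s a
        rw [hQk1] at h
        calc T polk1 ((T polk1)^[n] Qk) (s, a) ≤ Qk1 (s, a) + γ * (γ ^ n * M) := h
          _ = Qk1 (s, a) + γ ^ (n + 1) * M := by ring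
  -- pass to the limit
  intro s a
  have hle : ∀ n : ℕ, Qk (s, a) ≤ Qk1 (s, a) + γ ^ n * M := by
    intro n
    exact le_trans ((hiter n).1 (s, a)) ((hiter n).2 (s, a))
  have htend : Filter.Tendsto (fun n : ℕ => Qk1 (s, a) + γ ^ n * M)
      Filter.atTop (nhds (Qk1 (s, a))) := by
    have h0 : Filter.Tendsto (fun n : ℕ => γ ^ n) Filter.atTop (nhds 0) :=
      tendsto_pow_atTop_nhds_zero_of_lt_one hγ0 hγ1
    have := (tendsto_const_nhds (x := Qk1 (s, a)) (f := Filter.atTop)).add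
      (h0.mul_const M)
    simpa using this
  exact ge_of_tendsto' htend hle
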